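/- For all integers k ≥ 0 and j ≥ 0, let g = z · ∏_{s=−j}^{k+j} (x − s·z)(y − s·z) ∈ S, the defining polynomial of the cone over the grid arrangement A_0. Then D_0(g) is a free S-module of rank 2 admitting a basis consisting of two derivations each homogeneous of degree k+2j+1. (Equivalently, T_{A_0} ≅ O_{ℙ²}(−k−2j−1)^2.) -/
import Mathlib

open MvPolynomial

noncomputable section

abbrev S := MvPolynomial (Fin 3) ℝ

/-- The module of logarithmic derivations annihilating `f`. -/
def D0 (f : S) : Submodule S (Derivation ℝ S S) where
  carrier := {θ | θ f = 0}
  add_mem' := by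
    intro a b ha hb
    simp only [Set.mem_setOf_eq] at *
    simp [ha, hb]
  zero_mem' := by simp
  smul_mem' := by
    intro c θ hθ
    simp only [Set.mem_setOf_eq] at *
    simp [hθ]

/-- A derivation is homogeneous of degree `d` if its values on the variables are
homogeneous of degree `d`. -/
def IsHomogDer (θ : Derivation ℝ S S) (d : ℕ) : Prop :=
  ∀ i : Fin 3, (θ (X i)).IsHomogeneous d

/-- Defining polynomial of the cone over the grid arrangement `A_0`. -/
def gridPoly (j k : ℕ) : S :=
  X 2 * ∏ s ∈ Finset.Icc (-(j : ℤ)) ((k : ℤ) + j),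
    ((X 0 - C (s : ℝ) * X 2) * (X 1 - C (s : ℝ) * X 2))

namespace GridAux

/-! ### Primality of linear forms -/

lemma prime_X0 : Prime (X 0 : S) := by
  have e := MvPolynomial.finSuccEquiv ℝ 2
  refine comap_prime (f := (MvPolynomial.finSuccEquiv ℝ 2))
    (g := (MvPolynomial.finSuccEquiv ℝ 2).symm) (fun a => by simp) ?_
  rw [finSuccEquiv_X_zero]
  exact Polynomial.prime_X

lemma prime_Xi (i : Fin 3) : Prime (X i : S) := by
  refine comap_prime (f := (renameEquiv ℝ (Equiv.swap (0 : Fin 3) i)).symm)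
    (g := (renameEquiv ℝ (Equiv.swap (0 : Fin 3) i)))
    (fun a => (renameEquiv ℝ (Equiv.swap (0 : Fin 3) i)).apply_symm_apply a) ?_
  have : (renameEquiv ℝ (Equiv.swap (0 : Fin 3) i)).symm (X i) = X 0 := by
    simp [renameEquiv, Equiv.swap_apply_right]
  rw [this]
  exact prime_X0

/-- A shearing substitution `Xᵢ ↦ Xᵢ - c Xⱼ`. -/
def shear (i jv : Fin 3) (c : ℝ) : S →ₐ[ℝ] S :=
  aeval (fun m => if m = i then X i - C c * X jv else X m)

lemma shear_comp (i jv : Fin 3) (hij : jv ≠ i) (c : ℝ) :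
    (shear i jv c).comp (shear i jv (-c)) = AlgHom.id ℝ S := by
  apply MvPolynomial.algHom_ext
  intro m
  by_cases hm : m = i
  · subst hm
    simp only [AlgHom.comp_apply, AlgHom.id_apply, shear, aeval_X, if_pos rfl]
    rw [if_pos trivial, map_sub, map_mul, aeval_X, aeval_X, if_pos rfl, if_neg hij, aeval_C,
      MvPolynomial.algebraMap_eq, map_neg]
    ring
  · simp [shear, aeval_X, if_neg hm]

def shearEquiv (i jv : Fin 3) (hij : jv ≠ i) (c : ℝ) : S ≃ₐ[ℝ] S :=
  AlgEquiv.ofAlgHom (shear i jv c) (shear i jv (-c)) (shear_comp i jv hij c)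
    (by have h := shear_comp i jv hij (-c); rwa [neg_neg] at h)

lemma prime_lin (i jv : Fin 3) (hij : jv ≠ i) (c : ℝ) :
    Prime (X i - C c * X jv : S) := by
  set e := shearEquiv i jv hij c with he
  have hx : e (X i) = X i - C c * X jv := by
    simp [he, shearEquiv, shear, aeval_X]
  refine comap_prime (f := e.symm) (g := e) (fun a => by simp) ?_
  have : e.symm (X i - C c * X jv) = X i := by rw [← hx, AlgEquiv.symm_apply_apply]
  rw [this]
  exact prime_Xi i

/-! ### Generic divisibility lemmas -/

lemma not_dvd_of_eval (p f : S) (v : Fin 3 → ℝ) (hp : eval v p = 0) (hf : eval v f ≠ 0) :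
    ¬ p ∣ f := by
  rintro ⟨c, rfl⟩
  rw [map_mul, hp, zero_mul] at hf
  exact hf rfl

lemma ne_zero_of_eval (f : S) (v : Fin 3 → ℝ) (hf : eval v f ≠ 0) : f ≠ 0 := by
  rintro rfl
  simp at hf

lemma prod_primes_dvd (t : Finset ℤ) (p : ℤ → S) (f : S)
    (hp : ∀ s ∈ t, Prime (p s)) (hd : ∀ s ∈ t, p s ∣ f)
    (hnd : ∀ s ∈ t, ∀ r ∈ t, s ≠ r → ¬ p s ∣ p r) :
    (∏ s ∈ t, p s) ∣ f := by
  classical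
  induction t using Finset.induction_on with
  | empty => simp
  | @insert a t ha ih =>
    have hpa := hp a (Finset.mem_insert_self a t)
    have hprod : (∏ s ∈ t, p s) ∣ f :=
      ih (fun s hs => hp s (Finset.mem_insert_of_mem hs))
        (fun s hs => hd s (Finset.mem_insert_of_mem hs))
        (fun s hs r hr hsr => hnd s (Finset.mem_insert_of_mem hs) r
          (Finset.mem_insert_of_mem hr) hsr)
    obtain ⟨c, hc⟩ := hprod
    have hnotdvd : ¬ p a ∣ ∏ s ∈ t, p s := by
      intro hdvd
      obtain ⟨r, hr, hdr⟩ := hpa.exists_mem_finset_dvd hdvd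
      exact hnd a (Finset.mem_insert_self a t) r (Finset.mem_insert_of_mem hr)
        (by rintro rfl; exact ha hr) hdr
    have hdvdc : p a ∣ c := by
      have h2 : p a ∣ (∏ s ∈ t, p s) * c := hc ▸ hd a (Finset.mem_insert_self a t)
      exact (hpa.2.2 _ _ h2).resolve_left hnotdvd
    obtain ⟨w, hw⟩ := hdvdc
    rw [Finset.prod_insert ha]
    exact ⟨w, by rw [hc, hw]; ring⟩

/-! ### Derivations on products -/

lemma der_prod (D : Derivation ℝ S S) (t : Finset ℤ) (f : ℤ → S) :
    D (∏ s ∈ t, f s) = ∑ s ∈ t, (∏ r ∈ t.erase s, f r) * D (f s) := by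
  classical
  induction t using Finset.induction_on with
  | empty => simp
  | @insert a t ha ih =>
    rw [Finset.prod_insert ha, Derivation.leibniz, smul_eq_mul, smul_eq_mul, ih,
      Finset.sum_insert ha, Finset.erase_insert ha, add_comm]
    congr 1
    rw [Finset.mul_sum]
    refine Finset.sum_congr rfl fun s hs => ?_
    rw [Finset.erase_insert_of_ne (ne_of_mem_of_not_mem hs ha).symm,
      Finset.prod_insert (fun h => ha (Finset.mem_of_mem_erase h))]
    ring

/-! ### The grid arrangement data -/

def T (k j : ℕ) : Finset ℤ := Finset.Icc (-(j : ℤ)) ((k : ℤ) + j)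

def lin (i : Fin 3) (s : ℤ) : S := X i - C (s : ℝ) * X 2

def PP (k j : ℕ) (i : Fin 3) : S := ∏ s ∈ T k j, lin i s

def DD (k j : ℕ) (i : Fin 3) : S := ∑ s ∈ T k j, ∏ r ∈ (T k j).erase s, lin i r

def ZZ (k j : ℕ) (i : Fin 3) : S :=
  ∑ s ∈ T k j, C (s : ℝ) * ∏ r ∈ (T k j).erase s, lin i r

def NS (k j : ℕ) : S := ((2 * (k + 2 * j + 1) + 1 : ℕ) : S)

lemma card_T (k j : ℕ) : (T k j).card = k + 2 * j + 1 := by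
  rw [T, Int.card_Icc]
  omega

lemma gridPoly_pairs (k j : ℕ) :
    gridPoly j k = X 2 * ∏ s ∈ T k j, (lin 0 s * lin 1 s) := rfl

lemma gridPoly_eq (k j : ℕ) : gridPoly j k = X 2 * (PP k j 0 * PP k j 1) := by
  rw [gridPoly_pairs, PP, PP, ← Finset.prod_mul_distrib]

lemma prime_lin' (i : Fin 3) (hi : i ≠ 2) (s : ℤ) : Prime (lin i s) := by
  rw [lin]
  exact prime_lin i 2 (Ne.symm hi) _

lemma sum_lin_mul (k j : ℕ) (i : Fin 3) :
    ∑ s ∈ T k j, (∏ r ∈ (T k j).erase s, lin i r) * lin i s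
      = ((k + 2 * j + 1 : ℕ) : S) * PP k j i := by
  have h : ∀ s ∈ T k j, (∏ r ∈ (T k j).erase s, lin i r) * lin i s = PP k j i := by
    intro s hs
    rw [mul_comm, Finset.mul_prod_erase _ _ hs, PP]
  rw [Finset.sum_congr rfl h, Finset.sum_const, card_T, nsmul_eq_mul]

lemma euler (k j : ℕ) (i : Fin 3) :
    X i * DD k j i - X 2 * ZZ k j i = ((k + 2 * j + 1 : ℕ) : S) * PP k j i := by
  rw [DD, ZZ, Finset.mul_sum, Finset.mul_sum, ← Finset.sum_sub_distrib, ← sum_lin_mul]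
  refine Finset.sum_congr rfl fun s hs => ?_
  simp only [lin]
  ring

/-- value of a derivation on a linear form -/
lemma der_lin (δ : Derivation ℝ S S) (i : Fin 3) (s : ℤ) :
    δ (lin i s) = δ (X i) - C (s : ℝ) * δ (X 2) := by
  rw [lin, map_sub, Derivation.leibniz, derivation_C]
  simp [smul_eq_mul]

lemma der_PP (δ : Derivation ℝ S S) (k j : ℕ) (i : Fin 3) :
    δ (PP k j i) = δ (X i) * DD k j i - δ (X 2) * ZZ k j i := by
  rw [PP, der_prod, DD, ZZ, Finset.mul_sum, Finset.mul_sum, ← Finset.sum_sub_distrib]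
  refine Finset.sum_congr rfl fun s hs => ?_
  rw [der_lin]
  ring

/-! ### The two derivations -/

def th1 (k j : ℕ) : Derivation ℝ S S :=
  mkDerivation ℝ ![DD k j 1 * X 0, DD k j 1 * X 1 - NS k j * PP k j 1, DD k j 1 * X 2]

def th2 (k j : ℕ) : Derivation ℝ S S :=
  mkDerivation ℝ ![DD k j 0 * X 0 - NS k j * PP k j 0, DD k j 0 * X 1, DD k j 0 * X 2]

lemma th1_X0 (k j : ℕ) : th1 k j (X 0) = DD k j 1 * X 0 := by
  rw [th1, mkDerivation_X]; rfl

lemma th1_X1 (k j : ℕ) : th1 k j (X 1) = DD k j 1 * X 1 - NS k j * PP k j 1 := by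
  rw [th1, mkDerivation_X]; rfl

lemma th1_X2 (k j : ℕ) : th1 k j (X 2) = DD k j 1 * X 2 := by
  rw [th1, mkDerivation_X]; rfl

lemma th2_X0 (k j : ℕ) : th2 k j (X 0) = DD k j 0 * X 0 - NS k j * PP k j 0 := by
  rw [th2, mkDerivation_X]; rfl

lemma th2_X1 (k j : ℕ) : th2 k j (X 1) = DD k j 0 * X 1 := by
  rw [th2, mkDerivation_X]; rfl

lemma th2_X2 (k j : ℕ) : th2 k j (X 2) = DD k j 0 * X 2 := by
  rw [th2, mkDerivation_X]; rfl

lemma hNS (k j : ℕ) : NS k j = 2 * ((k + 2 * j + 1 : ℕ) : S) + 1 := by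
  rw [NS]; push_cast; ring

/-! ### Membership in D0 -/

lemma th1_mem (k j : ℕ) : th1 k j (gridPoly j k) = 0 := by
  have h0 : th1 k j (PP k j 0)
      = DD k j 1 * (((k + 2 * j + 1 : ℕ) : S) * PP k j 0) := by
    rw [der_PP, th1_X0, th1_X2, ← euler]
    ring
  have h1 : th1 k j (PP k j 1)
      = DD k j 1 * (((k + 2 * j + 1 : ℕ) : S) * PP k j 1)
        - NS k j * PP k j 1 * DD k j 1 := by
    rw [der_PP, th1_X1, th1_X2, ← euler]
    ring
  rw [gridPoly_eq, Derivation.leibniz, Derivation.leibniz, h0, h1, th1_X2,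
    smul_eq_mul, smul_eq_mul, smul_eq_mul, smul_eq_mul, hNS]
  ring

lemma th2_mem (k j : ℕ) : th2 k j (gridPoly j k) = 0 := by
  have h0 : th2 k j (PP k j 0)
      = DD k j 0 * (((k + 2 * j + 1 : ℕ) : S) * PP k j 0)
        - NS k j * PP k j 0 * DD k j 0 := by
    rw [der_PP, th2_X0, th2_X2, ← euler]
    ring
  have h1 : th2 k j (PP k j 1)
      = DD k j 0 * (((k + 2 * j + 1 : ℕ) : S) * PP k j 1) := by
    rw [der_PP, th2_X1, th2_X2, ← euler]
    ring
  rw [gridPoly_eq, Derivation.leibniz, Derivation.leibniz, h0, h1, th2_X2,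
    smul_eq_mul, smul_eq_mul, smul_eq_mul, smul_eq_mul, hNS]
  ring

/-! ### Homogeneity -/

lemma homog_lin (i : Fin 3) (s : ℤ) : (lin i s).IsHomogeneous 1 := by
  rw [lin]
  refine (isHomogeneous_X _ _).sub ?_
  simpa using (isHomogeneous_C _ ((s : ℝ))).mul (isHomogeneous_X _ _)

lemma homog_PP (k j : ℕ) (i : Fin 3) : (PP k j i).IsHomogeneous (k + 2 * j + 1) := by
  have h := IsHomogeneous.prod (T k j) (lin i) (fun _ => 1) (fun s _ => homog_lin i s)
  rw [Finset.sum_const, card_T, smul_eq_mul, mul_one] at h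
  exact h

lemma homog_DD (k j : ℕ) (i : Fin 3) : (DD k j i).IsHomogeneous (k + 2 * j) := by
  refine IsHomogeneous.sum _ _ _ fun s hs => ?_
  have h := IsHomogeneous.prod ((T k j).erase s) (lin i) (fun _ => 1)
    (fun r _ => homog_lin i r)
  rw [Finset.sum_const, Finset.card_erase_of_mem hs, card_T, smul_eq_mul, mul_one] at h
  simpa using h

lemma homog_NSPP (k j : ℕ) (i : Fin 3) :
    (NS k j * PP k j i).IsHomogeneous (k + 2 * j + 1) := by
  have hc : NS k j = C (((2 * (k + 2 * j + 1) + 1 : ℕ) : ℝ)) := by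
    rw [NS, map_natCast (C : ℝ →+* S)]
  rw [hc]
  simpa only [Nat.zero_add] using (isHomogeneous_C _ _).mul (homog_PP k j i)

lemma th1_homog (k j : ℕ) : IsHomogDer (th1 k j) (k + 2 * j + 1) := by
  intro i
  fin_cases i
  · show ((th1 k j) (X 0)).IsHomogeneous (k + 2 * j + 1)
    rw [th1_X0]
    exact (homog_DD k j 1).mul (isHomogeneous_X _ _)
  · show ((th1 k j) (X 1)).IsHomogeneous (k + 2 * j + 1)
    rw [th1_X1]
    exact ((homog_DD k j 1).mul (isHomogeneous_X _ _)).sub (homog_NSPP k j 1)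
  · show ((th1 k j) (X 2)).IsHomogeneous (k + 2 * j + 1)
    rw [th1_X2]
    exact (homog_DD k j 1).mul (isHomogeneous_X _ _)

lemma th2_homog (k j : ℕ) : IsHomogDer (th2 k j) (k + 2 * j + 1) := by
  intro i
  fin_cases i
  · show ((th2 k j) (X 0)).IsHomogeneous (k + 2 * j + 1)
    rw [th2_X0]
    exact ((homog_DD k j 0).mul (isHomogeneous_X _ _)).sub (homog_NSPP k j 0)
  · show ((th2 k j) (X 1)).IsHomogeneous (k + 2 * j + 1)
    rw [th2_X1]
    exact (homog_DD k j 0).mul (isHomogeneous_X _ _)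
  · show ((th2 k j) (X 2)).IsHomogeneous (k + 2 * j + 1)
    rw [th2_X2]
    exact (homog_DD k j 0).mul (isHomogeneous_X _ _)

/-! ### Nonvanishing / nondivisibility facts -/

lemma eval_lin (v : Fin 3 → ℝ) (i : Fin 3) (s : ℤ) :
    eval v (lin i s) = v i - (s : ℝ) * v 2 := by
  simp [lin]

lemma eval_PP_one (k j : ℕ) (i : Fin 3) (v : Fin 3 → ℝ)
    (hvi : v i = 1) (hv2 : v 2 = 0) : eval v (PP k j i) = 1 := by
  rw [PP, map_prod]
  refine Finset.prod_eq_one fun s _ => ?_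
  rw [eval_lin, hvi, hv2]; ring

lemma PP_ne_zero (k j : ℕ) (i : Fin 3) (hi : i ≠ 2) : PP k j i ≠ 0 := by
  have hvi : (fun m : Fin 3 => if m = 2 then (0:ℝ) else 1) i = 1 := by
    simp [hi]
  refine ne_zero_of_eval _ (fun m => if m = 2 then (0:ℝ) else 1) ?_
  rw [eval_PP_one k j i _ hvi (by simp)]
  norm_num

lemma X2_not_dvd_PP (k j : ℕ) (i : Fin 3) (hi : i ≠ 2) : ¬ (X 2 : S) ∣ PP k j i := by
  have hvi : (fun m : Fin 3 => if m = 2 then (0:ℝ) else 1) i = 1 := by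
    simp [hi]
  refine not_dvd_of_eval _ _ (fun m => if m = 2 then (0:ℝ) else 1) (by simp) ?_
  rw [eval_PP_one k j i _ hvi (by simp)]
  norm_num

lemma NS_ne_zero (k j : ℕ) : NS k j ≠ 0 := by
  refine ne_zero_of_eval _ (fun _ => (0:ℝ)) ?_
  rw [NS]
  simp only [map_natCast]
  positivity

lemma DD_ne_zero (k j : ℕ) (i : Fin 3) (hi : i ≠ 2) : DD k j i ≠ 0 := by
  refine ne_zero_of_eval _ (fun m => if m = 2 then (0:ℝ) else 1) ?_
  have : eval (fun m : Fin 3 => if m = 2 then (0:ℝ) else 1) (DD k j i)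
      = ((k + 2 * j + 1 : ℕ) : ℝ) := by
    rw [DD, map_sum]
    rw [Finset.sum_congr rfl (g := fun _ => (1:ℝ)) fun s hs => ?_]
    · rw [Finset.sum_const, card_T, nsmul_eq_mul, mul_one]
    · rw [map_prod]
      refine Finset.prod_eq_one fun r _ => ?_
      rw [eval_lin]
      simp [hi]
  rw [this]
  positivity

lemma lin_not_dvd_lin (k j : ℕ) {s r : ℤ} (i : Fin 3) (hi : i ≠ 2) (hne : s ≠ r) :
    ¬ lin i s ∣ lin i r := by
  set v : Fin 3 → ℝ := fun m => if m = 2 then 1 else if m = i then (s:ℝ) else 0 with hv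
  refine not_dvd_of_eval _ _ v ?_ ?_
  · rw [eval_lin]; simp [hv, hi]
  · rw [eval_lin]
    have : v i = (s : ℝ) := by simp [hv, hi]
    rw [this, show v 2 = 1 by simp [hv]]
    have : (s : ℝ) ≠ (r : ℝ) := by exact_mod_cast hne
    intro hcon
    apply this
    linarith [hcon]

lemma mem_T_le (k j : ℕ) {r : ℤ} (hr : r ∈ T k j) : (r : ℝ) < (k : ℝ) + j + 1 := by
  have h2 : r ≤ (k : ℤ) + j := (Finset.mem_Icc.mp hr).2
  have : (r : ℝ) ≤ (k : ℝ) + j := by exact_mod_cast h2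
  linarith

lemma lin_not_dvd_cof (k j : ℕ) {s : ℤ} (hs : s ∈ T k j) (i i' : Fin 3)
    (hi : i ≠ 2) (hi' : i' ≠ 2) (hii' : i ≠ i') :
    ¬ lin i s ∣ X 2 * (lin i' s * ∏ r ∈ (T k j).erase s, (lin 0 r * lin 1 r)) := by
  set v : Fin 3 → ℝ :=
    fun m => if m = i then (s : ℝ) else if m = 2 then 1 else (k : ℝ) + j + 1 with hv
  have hv2 : v 2 = 1 := by rw [hv]; simp [Ne.symm hi]
  have hvi : v i = (s : ℝ) := by rw [hv]; simp
  have hvi' : v i' = (k : ℝ) + j + 1 := by rw [hv]; simp [Ne.symm hii', hi']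
  have hother : ∀ m : Fin 3, m ≠ 2 → v m = (s : ℝ) ∨ v m = (k : ℝ) + j + 1 := by
    intro m hm2
    by_cases hmi : m = i
    · left; rw [hmi, hvi]
    · right; rw [hv]; simp [hmi, hm2]
  refine not_dvd_of_eval _ _ v ?_ ?_
  · rw [eval_lin, hvi, hv2]; ring
  · rw [map_mul, map_mul, map_prod, eval_X, hv2]
    refine mul_ne_zero one_ne_zero (mul_ne_zero ?_ ?_)
    · rw [eval_lin, hvi', hv2]
      have := mem_T_le k j hs
      intro hcon; nlinarith [hcon]
    · rw [Finset.prod_ne_zero_iff]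
      intro r hr
      have hrT : r ∈ T k j := Finset.mem_of_mem_erase hr
      have hrs : r ≠ s := Finset.ne_of_mem_erase hr
      have hfac : ∀ m : Fin 3, m ≠ 2 → eval v (lin m r) ≠ 0 := by
        intro m hm2
        rw [eval_lin, hv2, mul_one]
        rcases hother m hm2 with h | h
        · rw [h]
          have : (r : ℝ) ≠ (s : ℝ) := by exact_mod_cast hrs
          intro hcon; apply this; linarith
        · rw [h]
          have := mem_T_le k j hrT
          intro hcon; nlinarith [hcon]
      rw [map_mul]
      exact mul_ne_zero (hfac 0 (by decide)) (hfac 1 (by decide))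

lemma key_dvd (k j : ℕ) (δ : Derivation ℝ S S) (hδ : δ (gridPoly j k) = 0)
    (hC : (X 2 : S) ∣ δ (X 2))
    (i i' : Fin 3) (hi : i ≠ 2) (hi' : i' ≠ 2) (hii' : i ≠ i')
    (hpair : ∀ s, lin 0 s * lin 1 s = lin i s * lin i' s) :
    ∃ u, X i * δ (X 2) - X 2 * δ (X i) = X 2 * PP k j i * u := by
  have hstep : ∀ s ∈ T k j, lin i s ∣ (δ (X i) - C (s : ℝ) * δ (X 2)) := by
    intro s hs
    have hfac : gridPoly j k
        = lin i s * (X 2 * (lin i' s * ∏ r ∈ (T k j).erase s, (lin 0 r * lin 1 r))) := by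
      rw [gridPoly_pairs, ← Finset.mul_prod_erase _ _ hs, hpair s]
      ring
    have e0 := hδ
    rw [hfac, Derivation.leibniz, smul_eq_mul, smul_eq_mul] at e0
    have e1 : (X 2 * (lin i' s * ∏ r ∈ (T k j).erase s, (lin 0 r * lin 1 r))) * δ (lin i s)
        = lin i s * (- δ (X 2 * (lin i' s * ∏ r ∈ (T k j).erase s, (lin 0 r * lin 1 r)))) := by
      linear_combination e0
    have hdd := ((prime_lin' i hi s).2.2 _ _ ⟨_, e1⟩).resolve_left
      (lin_not_dvd_cof k j hs i i' hi hi' hii')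
    rwa [der_lin] at hdd
  have hstep2 : ∀ s ∈ T k j, lin i s ∣ (X i * δ (X 2) - X 2 * δ (X i)) := by
    intro s hs
    obtain ⟨c, hc⟩ := hstep s hs
    refine ⟨δ (X 2) - X 2 * c, ?_⟩
    have hl : lin i s = X i - C (s : ℝ) * X 2 := rfl
    linear_combination (-(X 2 : S)) * hc + (-(δ (X 2))) * hl
  have hPdvd : PP k j i ∣ (X i * δ (X 2) - X 2 * δ (X i)) := by
    rw [PP]
    refine prod_primes_dvd _ _ _ (fun s _ => prime_lin' i hi s) hstep2 ?_
    intro s _ r _ hsr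
    exact lin_not_dvd_lin k j i hi hsr
  obtain ⟨w, hw⟩ := hPdvd
  obtain ⟨c0, hc0⟩ := hC
  have hX2w : (X 2 : S) ∣ w := by
    have h2 : (X 2 : S) ∣ PP k j i * w := by
      refine ⟨X i * c0 - δ (X i), ?_⟩
      rw [← hw]
      linear_combination (X i : S) * hc0
    exact ((prime_Xi 2).2.2 _ _ h2).resolve_left (X2_not_dvd_PP k j i hi)
  obtain ⟨u, hu⟩ := hX2w
  exact ⟨u, by rw [hw, hu]; ring⟩

lemma mem_D0 {f : S} {θ : Derivation ℝ S S} (h : θ f = 0) : θ ∈ D0 f := h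

lemma mem_D0' {f : S} {θ : Derivation ℝ S S} (h : θ ∈ D0 f) : θ f = 0 := h

end GridAux

open GridAux in
theorem grid_free (k j : ℕ) :
    ∃ θ : Fin 2 → Derivation ℝ S S,
      (∀ i, θ i ∈ D0 (gridPoly j k)) ∧
      (∀ i, IsHomogDer (θ i) (k + 2 * j + 1)) ∧
      (∀ δ ∈ D0 (gridPoly j k), ∃! a : Fin 2 → S, ∑ i, a i • θ i = δ) := by
  classical
  refine ⟨![th1 k j, th2 k j], ?_, ?_, ?_⟩
  · intro i; fin_cases i
    · exact mem_D0 (th1_mem k j)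
    · exact mem_D0 (th2_mem k j)
  · intro i; fin_cases i
    · exact th1_homog k j
    · exact th2_homog k j
  · intro δ hδmem
    have hδ : δ (gridPoly j k) = 0 := mem_D0' hδmem
    have hX2 : (X 2 : S) ≠ 0 := X_ne_zero _
    have hC : (X 2 : S) ∣ δ (X 2) := by
      have e0 := hδ
      rw [gridPoly_eq, Derivation.leibniz, smul_eq_mul, smul_eq_mul] at e0
      have h2 : (X 2 : S) ∣ (PP k j 0 * PP k j 1) * δ (X 2) :=
        ⟨-δ (PP k j 0 * PP k j 1), by linear_combination e0⟩
      refine ((prime_Xi 2).2.2 _ _ h2).resolve_left ?_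
      intro hcon
      rcases ((prime_Xi 2).dvd_mul).mp hcon with h | h
      · exact X2_not_dvd_PP k j 0 (by decide) h
      · exact X2_not_dvd_PP k j 1 (by decide) h
    obtain ⟨u1, hu1⟩ := key_dvd k j δ hδ hC 0 1 (by decide) (by decide) (by decide)
      (fun s => rfl)
    obtain ⟨u2, hu2⟩ := key_dvd k j δ hδ hC 1 0 (by decide) (by decide) (by decide)
      (fun s => mul_comm _ _)
    have hexp := hδ
    rw [gridPoly_eq, Derivation.leibniz, Derivation.leibniz,
      der_PP δ k j 0, der_PP δ k j 1] at hexp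
    simp only [smul_eq_mul] at hexp
    have hE0 := euler k j 0
    have hE1 := euler k j 1
    have hNSe := hNS k j
    have hstar : DD k j 0 * PP k j 1 * (X 0 * δ (X 2) - X 2 * δ (X 0))
        + DD k j 1 * PP k j 0 * (X 1 * δ (X 2) - X 2 * δ (X 1))
        = NS k j * δ (X 2) * (PP k j 0 * PP k j 1) := by
      apply mul_left_cancel₀ hX2
      linear_combination (-(X 2 : S)) * hexp + δ (X 2) * PP k j 1 * X 2 * hE0
        + δ (X 2) * PP k j 0 * X 2 * hE1
        - X 2 * PP k j 0 * PP k j 1 * δ (X 2) * hNSe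
    have hPQ : PP k j 0 * PP k j 1 ≠ 0 :=
      mul_ne_zero (PP_ne_zero k j 0 (by decide)) (PP_ne_zero k j 1 (by decide))
    have hG3 : X 2 * (DD k j 0 * u1 + DD k j 1 * u2) = NS k j * δ (X 2) := by
      apply mul_left_cancel₀ hPQ
      linear_combination hstar - DD k j 0 * PP k j 1 * hu1 - DD k j 1 * PP k j 0 * hu2
    have hG1 : X 0 * (DD k j 0 * u1 + DD k j 1 * u2)
        = NS k j * (PP k j 0 * u1 + δ (X 0)) := by
      apply mul_left_cancel₀ hX2
      linear_combination X 0 * hG3 + NS k j * hu1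
    have hG2 : X 1 * (DD k j 0 * u1 + DD k j 1 * u2)
        = NS k j * (PP k j 1 * u2 + δ (X 1)) := by
      apply mul_left_cancel₀ hX2
      linear_combination X 1 * hG3 + NS k j * hu2
    obtain ⟨invN, hinv⟩ : ∃ w : S, w * NS k j = 1 := by
      refine ⟨C (((2 * (k + 2 * j + 1) + 1 : ℕ) : ℝ))⁻¹, ?_⟩
      rw [NS, ← map_natCast (C : ℝ →+* S) (2 * (k + 2 * j + 1) + 1), ← map_mul,
        inv_mul_cancel₀ (by positivity), map_one]
    have ha : (∑ i : Fin 2, (![invN * u2, invN * u1]) i • (![th1 k j, th2 k j]) i) = δ := by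
      refine derivation_ext fun m => ?_
      have hm : (∑ i : Fin 2, (![invN * u2, invN * u1]) i • (![th1 k j, th2 k j]) i) (X m)
          = (invN * u2) * th1 k j (X m) + (invN * u1) * th2 k j (X m) := by
        simp [Fin.sum_univ_two]
      rw [hm]
      fin_cases m
      · show (invN * u2) * th1 k j (X 0) + (invN * u1) * th2 k j (X 0) = δ (X 0)
        rw [th1_X0, th2_X0]
        linear_combination invN * hG1 + δ (X 0) * hinv
      · show (invN * u2) * th1 k j (X 1) + (invN * u1) * th2 k j (X 1) = δ (X 1)
        rw [th1_X1, th2_X1]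
        linear_combination invN * hG2 + δ (X 1) * hinv
      · show (invN * u2) * th1 k j (X 2) + (invN * u1) * th2 k j (X 2) = δ (X 2)
        rw [th1_X2, th2_X2]
        linear_combination invN * hG3 + δ (X 2) * hinv
    refine ⟨![invN * u2, invN * u1], ha, ?_⟩
    intro y hy
    have hcomp : ∀ m : Fin 3, y 0 * th1 k j (X m) + y 1 * th2 k j (X m)
        = (invN * u2) * th1 k j (X m) + (invN * u1) * th2 k j (X m) := by
      intro m
      have h := congrArg (fun D : Derivation ℝ S S => D (X m)) (hy.trans ha.symm)
      simpa [Fin.sum_univ_two] using h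
    have e1 := hcomp 0
    rw [th1_X0, th2_X0] at e1
    have e3 := hcomp 2
    rw [th1_X2, th2_X2] at e3
    have hd : (y 0 - invN * u2) * DD k j 1 + (y 1 - invN * u1) * DD k j 0 = 0 := by
      apply mul_left_cancel₀ hX2
      linear_combination e3
    have h5 : NS k j * PP k j 0 * (y 1 - invN * u1) = 0 := by
      linear_combination X 0 * hd - e1
    have hy1 : y 1 = invN * u1 := by
      have h6 := (mul_eq_zero.mp h5).resolve_left
        (mul_ne_zero (NS_ne_zero k j) (PP_ne_zero k j 0 (by decide)))
      exact sub_eq_zero.mp h6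
    have h7 : (y 0 - invN * u2) * DD k j 1 = 0 := by
      linear_combination hd - DD k j 0 * hy1
    have hy0 : y 0 = invN * u2 :=
      sub_eq_zero.mp ((mul_eq_zero.mp h7).resolve_right (DD_ne_zero k j 1 (by decide)))
    funext i; fin_cases i
    · simpa using hy0
    · simpa using hy1

end
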